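/- (Classical Newton–Wigner theorem, spinning case on the Lie–Poisson phase space.) Let X : Γ → ℝ³ be a C¹ function on Γ = ℝ³ × ℝ³ × ℝ³ whose components satisfy (i) {X^a, X^b} = 0 for all a,b; (ii) {X^a, P_b} = δ_ab for all a,b; (iii) {J_ab, X^c} = δ_ac X^b − δ_bc X^a for all a,b,c; (iv) X(x,−p,−s) = X(x,p,s) for all (x,p,s) (time-reversal invariance). Then X(x,p,s) = x for all (x,p,s) ∈ Γ. Conversely, the projection (x,p,s) ↦ x satisfies (i)–(iv). -/

import Mathlib

noncomputable section

open Finset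

abbrev R3 := Fin 3 → ℝ

/-- The spin phase space Γ = ℝ³ × ℝ³ × ℝ³ with points (x, p, s). -/
abbrev Phase := R3 × R3 × R3

/-- Euclidean dot product on ℝ³. -/
def dot3 (v w : R3) : ℝ := ∑ a, v a * w a

/-- Euclidean norm on ℝ³. -/
def norm3 (v : R3) : ℝ := Real.sqrt (dot3 v v)

/-- Cross product on ℝ³. -/
def cross3 (v w : R3) : R3 :=
  ![v 1 * w 2 - v 2 * w 1, v 2 * w 0 - v 0 * w 2, v 0 * w 1 - v 1 * w 0]

/-- Kronecker delta. -/
def kdelta (a b : Fin 3) : ℝ := if a = b then 1 else 0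

/-- Sign of an integer, valued in ℝ. -/
def isgn (x : ℤ) : ℝ := if 0 < x then 1 else if x < 0 then -1 else 0

/-- Totally antisymmetric symbol on three indices with ε₀₁₂ = +1. -/
def eps3 (a b c : Fin 3) : ℝ :=
  isgn (((b : ℕ) : ℤ) - ((a : ℕ) : ℤ)) * isgn (((c : ℕ) : ℤ) - ((a : ℕ) : ℤ)) *
  isgn (((c : ℕ) : ℤ) - ((b : ℕ) : ℤ))

/-- Gradient of f with respect to x. -/
def dX (f : Phase → ℝ) (γ : Phase) : R3 := fun a => fderiv ℝ f γ (Pi.single a 1, 0, 0)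

/-- Gradient of f with respect to p. -/
def dP (f : Phase → ℝ) (γ : Phase) : R3 := fun a => fderiv ℝ f γ (0, Pi.single a 1, 0)

/-- Gradient of f with respect to s. -/
def dS (f : Phase → ℝ) (γ : Phase) : R3 := fun a => fderiv ℝ f γ (0, 0, Pi.single a 1)

/-- Poisson bracket {f,g} = ∇ₓf·∇ₚg − ∇ₚf·∇ₓg + s·(∇ₛf × ∇ₛg) on Γ. -/
def pb (f g : Phase → ℝ) (γ : Phase) : ℝ :=
  dot3 (dX f γ) (dP g γ) - dot3 (dP f γ) (dX g γ)
    + dot3 γ.2.2 (cross3 (dS f γ) (dS g γ))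

/-- Generator of spatial translations: P_a(x,p,s) = p_a. -/
def Pgen (a : Fin 3) : Phase → ℝ := fun γ => γ.2.1 a

/-- Generator of rotations: J_ab(x,p,s) = x_a p_b − x_b p_a + ε_{abc} s_c. -/
def Jgen (a b : Fin 3) : Phase → ℝ :=
  fun γ => γ.1 a * γ.2.1 b - γ.1 b * γ.2.1 a + ∑ c, eps3 a b c * γ.2.2 c

-- coordinate CLMs
def cXc (a : Fin 3) : Phase →L[ℝ] ℝ :=
  (ContinuousLinearMap.proj a).comp (ContinuousLinearMap.fst ℝ R3 (R3 × R3))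
def cPc (a : Fin 3) : Phase →L[ℝ] ℝ :=
  (ContinuousLinearMap.proj a).comp ((ContinuousLinearMap.fst ℝ R3 R3).comp
    (ContinuousLinearMap.snd ℝ R3 (R3 × R3)))
def cSc (a : Fin 3) : Phase →L[ℝ] ℝ :=
  (ContinuousLinearMap.proj a).comp ((ContinuousLinearMap.snd ℝ R3 R3).comp
    (ContinuousLinearMap.snd ℝ R3 (R3 × R3)))

@[simp] lemma cXc_apply (a : Fin 3) (γ : Phase) : cXc a γ = γ.1 a := rfl
@[simp] lemma cPc_apply (a : Fin 3) (γ : Phase) : cPc a γ = γ.2.1 a := rfl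
@[simp] lemma cSc_apply (a : Fin 3) (γ : Phase) : cSc a γ = γ.2.2 a := rfl

lemma phase_p_eq (w : R3) : ((0, w, 0) : Phase) = ∑ d, w d • ((0, Pi.single d 1, 0) : Phase) := by
  have hw : w = ∑ d, Pi.single d (w d) := (Finset.univ_sum_single w).symm
  rw [Prod.ext_iff, Prod.ext_iff]
  refine ⟨?_, ?_, ?_⟩ <;> simp [Prod.fst_sum, Prod.snd_sum, ← Pi.single_smul]
  · exact (Finset.univ_sum_single w).symm

lemma phase_s_eq (w : R3) : ((0, 0, w) : Phase) = ∑ d, w d • ((0, 0, Pi.single d 1) : Phase) := by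
  rw [Prod.ext_iff, Prod.ext_iff]
  refine ⟨?_, ?_, ?_⟩ <;> simp [Prod.fst_sum, Prod.snd_sum, ← Pi.single_smul]
  · exact (Finset.univ_sum_single w).symm

lemma clm_p (L : Phase →L[ℝ] ℝ) (w : R3) :
    L (0, w, 0) = ∑ d, w d * L (0, Pi.single d 1, 0) := by
  rw [phase_p_eq, map_sum]
  refine Finset.sum_congr rfl fun d _ => ?_
  rw [map_smul, smul_eq_mul]

lemma clm_s (L : Phase →L[ℝ] ℝ) (w : R3) :
    L (0, 0, w) = ∑ d, w d * L (0, 0, Pi.single d 1) := by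
  rw [phase_s_eq, map_sum]
  refine Finset.sum_congr rfl fun d _ => ?_
  rw [map_smul, smul_eq_mul]

-- scalar triple product
lemma triple (u v w : R3) : dot3 u (cross3 v w) = dot3 (cross3 u v) w := by
  simp [dot3, cross3, Fin.sum_univ_three]; ring
lemma clm_split (L : Phase →L[ℝ] ℝ) (u w : R3) :
    L (0, u, w) = L (0, u, 0) + L (0, 0, w) := by
  rw [← map_add]
  norm_num

@[simp] lemma single_kdelta (d a : Fin 3) : (Pi.single d 1 : R3) a = kdelta a d := by
  simp [Pi.single_apply, kdelta]

lemma dot3_kdelta (v : R3) (b : Fin 3) : dot3 v (fun a => kdelta b a) = v b := by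
  simp [dot3, kdelta, Fin.sum_univ_three]

-- Pgen facts
lemma hasFDerivAt_Pgen (b : Fin 3) (γ : Phase) : HasFDerivAt (Pgen b) (cPc b) γ :=
  (cPc b).hasFDerivAt

@[simp] lemma fderiv_Pgen (b : Fin 3) (γ : Phase) : fderiv ℝ (Pgen b) γ = cPc b :=
  (hasFDerivAt_Pgen b γ).fderiv

@[simp] lemma dX_Pgen (b : Fin 3) (γ : Phase) : dX (Pgen b) γ = fun _ => 0 := by
  funext a; simp [dX]
@[simp] lemma dP_Pgen (b : Fin 3) (γ : Phase) : dP (Pgen b) γ = fun a => kdelta b a := by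
  funext a; simp [dP]
@[simp] lemma dS_Pgen (b : Fin 3) (γ : Phase) : dS (Pgen b) γ = fun _ => 0 := by
  funext a; simp [dS]

@[simp] lemma cross3_zero_right (v : R3) : cross3 v (fun _ => 0) = fun _ => 0 := by
  funext d; fin_cases d <;> simp [cross3]
@[simp] lemma cross3_zero_left (v : R3) : cross3 (fun _ => 0) v = fun _ => 0 := by
  funext d; fin_cases d <;> simp [cross3]
@[simp] lemma dot3_zero_right (v : R3) : dot3 v (fun _ => 0) = 0 := by simp [dot3]
@[simp] lemma dot3_zero_left (v : R3) : dot3 (fun _ => 0) v = 0 := by simp [dot3]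

-- Jgen derivative
def Jd (a b : Fin 3) (γ : Phase) : Phase →L[ℝ] ℝ :=
  γ.1 a • cPc b + γ.2.1 b • cXc a - (γ.1 b • cPc a + γ.2.1 a • cXc b) +
    ∑ c, eps3 a b c • cSc c

lemma hasFDerivAt_Jgen (a b : Fin 3) (γ : Phase) : HasFDerivAt (Jgen a b) (Jd a b γ) γ := by
  have h1 : HasFDerivAt (fun γ : Phase => γ.1 a * γ.2.1 b)
      (γ.1 a • cPc b + γ.2.1 b • cXc a) γ :=
    ((cXc a).hasFDerivAt (x := γ)).mul ((cPc b).hasFDerivAt (x := γ))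
  have h2 : HasFDerivAt (fun γ : Phase => γ.1 b * γ.2.1 a)
      (γ.1 b • cPc a + γ.2.1 a • cXc b) γ :=
    ((cXc b).hasFDerivAt (x := γ)).mul ((cPc a).hasFDerivAt (x := γ))
  have h3 : HasFDerivAt (fun γ : Phase => ∑ c, eps3 a b c * γ.2.2 c)
      (∑ c, eps3 a b c • cSc c) γ := by
    refine HasFDerivAt.fun_sum fun c _ => ?_
    exact ((cSc c).hasFDerivAt (x := γ)).const_mul (eps3 a b c)
  exact ((h1.sub h2).add h3 : _)

@[simp] lemma fderiv_Jgen (a b : Fin 3) (γ : Phase) : fderiv ℝ (Jgen a b) γ = Jd a b γ :=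
  (hasFDerivAt_Jgen a b γ).fderiv

lemma Jd_apply (a b : Fin 3) (γ v : Phase) :
    Jd a b γ v = γ.1 a * v.2.1 b + γ.2.1 b * v.1 a - (γ.1 b * v.2.1 a + γ.2.1 a * v.1 b)
      + ∑ c, eps3 a b c * v.2.2 c := by
  simp [Jd, ContinuousLinearMap.sum_apply, smul_eq_mul]

lemma dX_Jgen (a b : Fin 3) (γ : Phase) :
    dX (Jgen a b) γ = fun d => γ.2.1 b * kdelta a d - γ.2.1 a * kdelta b d := by
  funext d; simp [dX, Jd_apply]

lemma dP_Jgen (a b : Fin 3) (γ : Phase) :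
    dP (Jgen a b) γ = fun d => γ.1 a * kdelta b d - γ.1 b * kdelta a d := by
  funext d; simp [dP, Jd_apply]

lemma dS_Jgen (a b : Fin 3) (γ : Phase) :
    dS (Jgen a b) γ = fun d => eps3 a b d := by
  funext d
  simp [dS, Jd_apply, Fin.sum_univ_three, kdelta]
lemma phase_x_eq (w : R3) : ((w, 0, 0) : Phase) = ∑ d, w d • ((Pi.single d 1, 0, 0) : Phase) := by
  rw [Prod.ext_iff, Prod.ext_iff]
  refine ⟨?_, ?_, ?_⟩ <;> simp [Prod.fst_sum, Prod.snd_sum, ← Pi.single_smul]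
  · exact (Finset.univ_sum_single w).symm

lemma clm_x (L : Phase →L[ℝ] ℝ) (w : R3) :
    L (w, 0, 0) = ∑ d, w d * L (Pi.single d 1, 0, 0) := by
  rw [phase_x_eq, map_sum]
  refine Finset.sum_congr rfl fun d _ => ?_
  rw [map_smul, smul_eq_mul]

lemma kdelta_comm (a b : Fin 3) : kdelta a b = kdelta b a := by
  simp [kdelta, eq_comm]

lemma sum_mul_kdelta (v : R3) (b : Fin 3) : (∑ a, v a * kdelta a b) = v b := by
  simp [kdelta, Fin.sum_univ_three]

section XL
variable (X : Phase → R3)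

lemma hXc (hX : ContDiff ℝ 1 X) (c : Fin 3) : ContDiff ℝ 1 (fun γ => X γ c) :=
  (contDiff_pi.mp hX) c

lemma hXd (hX : ContDiff ℝ 1 X) (c : Fin 3) (γ : Phase) :
    DifferentiableAt ℝ (fun γ => X γ c) γ :=
  ((hXc X hX c).differentiable one_ne_zero).differentiableAt

/-- From h2 : the x-gradient of X^c is the basis vector e_c. -/
lemma dX_X (h2 : ∀ a b : Fin 3, ∀ γ, pb (fun γ => X γ a) (Pgen b) γ = kdelta a b)
    (c b : Fin 3) (γ : Phase) :
    fderiv ℝ (fun γ => X γ c) γ (Pi.single b 1, 0, 0) = kdelta c b := by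
  have h := h2 c b γ
  unfold pb at h
  rw [dX_Pgen, dP_Pgen, dS_Pgen, dot3_kdelta, cross3_zero_right, dot3_zero_right] at h
  simp only [dot3_zero_right] at h
  simpa [dX] using h

/-- X(x,p,s) = x + X(0,p,s) componentwise. -/
lemma X_split (hX : ContDiff ℝ 1 X)
    (h2 : ∀ a b : Fin 3, ∀ γ, pb (fun γ => X γ a) (Pgen b) γ = kdelta a b)
    (x p s : R3) (c : Fin 3) : X (x, p, s) c = x c + X (0, p, s) c := by
  have hcurve : ∀ x : R3, HasFDerivAt (fun x : R3 => ((x, p, s) : Phase))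
      ((ContinuousLinearMap.id ℝ R3).prod 0) x := by
    intro x
    exact (ContinuousLinearMap.id ℝ R3).hasFDerivAt.prodMk (hasFDerivAt_const _ _)
  have hg : ∀ x : R3, HasFDerivAt (fun x : R3 => X (x, p, s) c - x c) (0 : R3 →L[ℝ] ℝ) x := by
    intro x
    have hc : HasFDerivAt (fun x : R3 => X (x, p, s) c)
        ((fderiv ℝ (fun γ => X γ c) (x, p, s)).comp ((ContinuousLinearMap.id ℝ R3).prod 0)) x :=
      by have h := ((hXd X hX c (x, p, s)).hasFDerivAt).comp x (hcurve x); exact h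
    have hp : HasFDerivAt (fun x : R3 => x c) (ContinuousLinearMap.proj c : R3 →L[ℝ] ℝ) x :=
      hasFDerivAt_apply c x
    have := hc.sub hp
    refine this.congr_fderiv ?_
    ext v
    have : (fderiv ℝ (fun γ => X γ c) (x, p, s)) (v, 0, 0) = v c := by
      rw [clm_x]
      simp only [dX_X X h2]
      simp only [kdelta_comm c]
      exact sum_mul_kdelta v c
    rw [Prod.mk_zero_zero] at this
    simp [ContinuousLinearMap.comp_apply, this]
  have h0 := is_const_of_fderiv_eq_zero (𝕜 := ℝ) (G := ℝ)
    (f := fun x : R3 => X (x, p, s) c - x c)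
    (fun x => (hg x).differentiableAt) (fun x => (hg x).fderiv) x 0
  simp only [Pi.zero_apply, sub_zero] at h0
  linarith

end XL
section XK
variable (X : Phase → R3)

/-- Master consequence of h3 at points with x = 0. -/
lemma key (h2 : ∀ a b : Fin 3, ∀ γ, pb (fun γ => X γ a) (Pgen b) γ = kdelta a b)
    (h3 : ∀ a b c : Fin 3, ∀ γ, pb (Jgen a b) (fun γ => X γ c) γ
      = kdelta a c * X γ b - kdelta b c * X γ a)
    (a b c : Fin 3) (p s : R3) :
    fderiv ℝ (fun γ => X γ c) ((0, p, s) : Phase)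
      (0, (fun d => p b * kdelta a d - p a * kdelta b d), cross3 s (fun d => eps3 a b d))
    = kdelta a c * X (0, p, s) b - kdelta b c * X (0, p, s) a := by
  have h := h3 a b c (0, p, s)
  unfold pb at h
  rw [dX_Jgen, dP_Jgen, dS_Jgen] at h
  have hmid : dot3 (fun d => ((0, p, s) : Phase).1 a * kdelta b d
      - ((0, p, s) : Phase).1 b * kdelta a d) (dX (fun γ => X γ c) (0, p, s)) = 0 := by
    simp [dot3]
  rw [hmid, sub_zero] at h
  rw [clm_split]
  have e1 : fderiv ℝ (fun γ => X γ c) ((0, p, s) : Phase)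
      (0, (fun d => p b * kdelta a d - p a * kdelta b d), 0)
      = dot3 (fun d => ((0, p, s) : Phase).2.1 b * kdelta a d
          - ((0, p, s) : Phase).2.1 a * kdelta b d) (dP (fun γ => X γ c) (0, p, s)) := by
    rw [clm_p]; simp [dot3, dP]
  have e2 : fderiv ℝ (fun γ => X γ c) ((0, p, s) : Phase)
      (0, 0, cross3 s (fun d => eps3 a b d))
      = dot3 ((0, p, s) : Phase).2.2 (cross3 (fun d => eps3 a b d)
          (dS (fun γ => X γ c) (0, p, s))) := by
    rw [clm_s]
    show _ = dot3 s (cross3 _ _)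
    rw [triple]
    simp [dot3, dS]
  rw [e1, e2]
  exact h

end XK

-- Rotations
open Real in
def Rrot (i j : Fin 3) (θ : ℝ) (v : R3) : R3 := fun d =>
  if d = i then cos θ * v i - sin θ * v j
  else if d = j then sin θ * v i + cos θ * v j
  else v d

def Arot (i j : Fin 3) (v : R3) : R3 := fun d =>
  if d = i then -(v j) else if d = j then v i else 0

@[simp] lemma Rrot_zero (i j : Fin 3) (v : R3) : Rrot i j 0 v = v := by
  funext d; simp only [Rrot, Real.cos_zero, Real.sin_zero, one_mul, zero_mul, sub_zero, zero_add]
  split_ifs with hh1 hh2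
  · rw [hh1]
  · rw [hh2]
  · rfl

lemma Rrot_apply_i (i j : Fin 3) (θ : ℝ) (v : R3) :
    Rrot i j θ v i = Real.cos θ * v i - Real.sin θ * v j := by simp [Rrot]

lemma Rrot_apply_j (i j : Fin 3) (hij : i ≠ j) (θ : ℝ) (v : R3) :
    Rrot i j θ v j = Real.sin θ * v i + Real.cos θ * v j := by
  simp [Rrot, if_neg (Ne.symm hij)]

lemma Rrot_apply_other (i j d : Fin 3) (hdi : d ≠ i) (hdj : d ≠ j) (θ : ℝ) (v : R3) :
    Rrot i j θ v d = v d := by simp [Rrot, if_neg hdi, if_neg hdj]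

lemma Rrot_inv (i j : Fin 3) (hij : i ≠ j) (θ : ℝ) (v : R3) :
    Rrot i j (-θ) (Rrot i j θ v) = v := by
  funext d
  by_cases hdi : d = i
  · rw [hdi, Rrot_apply_i, Rrot_apply_i, Rrot_apply_j i j hij, Real.cos_neg, Real.sin_neg]
    linear_combination v i * Real.sin_sq_add_cos_sq θ
  · by_cases hdj : d = j
    · rw [hdj, Rrot_apply_j i j hij, Rrot_apply_i, Rrot_apply_j i j hij, Real.cos_neg,
        Real.sin_neg]
      linear_combination v j * Real.sin_sq_add_cos_sq θ
    · rw [Rrot_apply_other i j d hdi hdj, Rrot_apply_other i j d hdi hdj]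

lemma Rrot_eq_zero (i j : Fin 3) (hij : i ≠ j) (θ : ℝ) (v : R3)
    (h : Rrot i j θ v = 0) : v = 0 := by
  have := congrArg (Rrot i j (-θ)) h
  rw [Rrot_inv i j hij] at this
  rw [this]
  funext d; simp only [Rrot, Pi.zero_apply]
  split_ifs <;> simp
example : eps3 0 1 2 = 1 := by norm_num [eps3, isgn]
example : eps3 2 0 1 = 1 := by norm_num [eps3, isgn]
example : eps3 0 1 0 = 0 := by norm_num [eps3, isgn]

@[simp] lemma Arot_i (i j : Fin 3) (w : R3) : Arot i j w i = -(w j) := by simp [Arot]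
lemma Arot_j (i j : Fin 3) (hij : i ≠ j) (w : R3) : Arot i j w j = w i := by
  simp [Arot, if_neg (Ne.symm hij)]
lemma Arot_other (i j d : Fin 3) (hdi : d ≠ i) (hdj : d ≠ j) (w : R3) : Arot i j w d = 0 := by
  simp [Arot, if_neg hdi, if_neg hdj]

section Cov
variable (X : Phase → R3)

lemma hR (i j : Fin 3) (hij : i ≠ j) (v : R3) (θ : ℝ) :
    HasDerivAt (fun θ => Rrot i j θ v) (Arot i j (Rrot i j θ v)) θ := by
  rw [hasDerivAt_pi]
  intro d
  by_cases hdi : d = i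
  · simp only [hdi, Rrot_apply_i, Arot_i]
    rw [Rrot_apply_j i j hij]
    have h := ((Real.hasDerivAt_cos θ).mul_const (v i)).sub
      ((Real.hasDerivAt_sin θ).mul_const (v j))
    convert h using 1
    · funext x; simp only [Pi.sub_apply]
    · ring
  · by_cases hdj : d = j
    · simp only [hdj]
      have hrw1 : (fun θ => Rrot i j θ v j) = fun θ => Real.sin θ * v i + Real.cos θ * v j := by
        funext θ; exact Rrot_apply_j i j hij θ v
      rw [hrw1, Arot_j i j hij, Rrot_apply_i]
      have h := ((Real.hasDerivAt_sin θ).mul_const (v i)).add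
        ((Real.hasDerivAt_cos θ).mul_const (v j))
      convert h using 1
      · funext x; simp only [Pi.add_apply]
      · ring
    · have hrw : (fun θ => Rrot i j θ v d) = fun _ => v d := by
        funext θ; exact Rrot_apply_other i j d hdi hdj θ v
      rw [hrw, Arot_other i j d hdi hdj]
      exact hasDerivAt_const θ (v d)

lemma cov (hX : ContDiff ℝ 1 X) (i j : Fin 3) (hij : i ≠ j)
    (hgen : ∀ p s : R3, ∀ c : Fin 3, fderiv ℝ (fun γ => X γ c) ((0, p, s) : Phase)
      (0, Arot i j p, Arot i j s) = Arot i j (X (0, p, s)) c)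
    (θ : ℝ) (p s : R3) :
    X (0, Rrot i j θ p, Rrot i j θ s) = Rrot i j θ (X (0, p, s)) := by
  set u : ℝ → R3 := fun θ => X (0, Rrot i j θ p, Rrot i j θ s) with hu
  have hcurve : ∀ θ : ℝ, HasDerivAt (fun θ => ((0, Rrot i j θ p, Rrot i j θ s) : Phase))
      ((0, Arot i j (Rrot i j θ p), Arot i j (Rrot i j θ s)) : Phase) θ :=
    fun θ => (hasDerivAt_const θ (0 : R3)).prodMk ((hR i j hij p θ).prodMk (hR i j hij s θ))
  have hu' : ∀ θ : ℝ, ∀ c : Fin 3, HasDerivAt (fun θ => u θ c) (Arot i j (u θ) c) θ := by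
    intro θ c
    have h := ((hXd X hX c _).hasFDerivAt).comp_hasDerivAt θ (hcurve θ)
    rw [hgen] at h
    exact h
  have hw1 : ∀ θ : ℝ, HasDerivAt (fun θ => Real.cos θ * u θ i + Real.sin θ * u θ j) 0 θ := by
    intro θ
    have h := ((Real.hasDerivAt_cos θ).mul (hu' θ i)).add ((Real.hasDerivAt_sin θ).mul (hu' θ j))
    refine h.congr_deriv ?_
    rw [Arot_i, Arot_j i j hij]
    ring
  have hw2 : ∀ θ : ℝ, HasDerivAt (fun θ => -(Real.sin θ) * u θ i + Real.cos θ * u θ j) 0 θ := by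
    intro θ
    have h := (((Real.hasDerivAt_sin θ).neg).mul (hu' θ i)).add
      ((Real.hasDerivAt_cos θ).mul (hu' θ j))
    refine h.congr_deriv ?_
    rw [Arot_i, Arot_j i j hij]
    simp only [Pi.neg_apply]
    ring
  have hc1 := is_const_of_deriv_eq_zero (𝕜 := ℝ)
    (f := fun θ => Real.cos θ * u θ i + Real.sin θ * u θ j)
    (fun t => (hw1 t).differentiableAt) (fun t => (hw1 t).deriv) θ 0
  have hc2 := is_const_of_deriv_eq_zero (𝕜 := ℝ)
    (f := fun θ => -(Real.sin θ) * u θ i + Real.cos θ * u θ j)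
    (fun t => (hw2 t).differentiableAt) (fun t => (hw2 t).deriv) θ 0
  have hcd : ∀ d : Fin 3, d ≠ i → d ≠ j → u θ d = u 0 d := by
    intro d hdi hdj
    have hder : ∀ t : ℝ, HasDerivAt (fun t => u t d) 0 t := by
      intro t
      have := hu' t d
      rwa [Arot_other i j d hdi hdj] at this
    exact is_const_of_deriv_eq_zero (𝕜 := ℝ) (f := fun t => u t d)
      (fun t => (hder t).differentiableAt) (fun t => (hder t).deriv) θ 0
  have hu0 : u 0 = X (0, p, s) := by rw [hu]; simp
  simp only [Real.cos_zero, Real.sin_zero, one_mul, zero_mul, add_zero, zero_add, neg_zero,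
    hu0] at hc1 hc2
  show u θ = _
  funext d
  by_cases hdi : d = i
  · rw [hdi, Rrot_apply_i]
    linear_combination Real.cos θ * hc1 - Real.sin θ * hc2 - u θ i * Real.sin_sq_add_cos_sq θ
  · by_cases hdj : d = j
    · rw [hdj, Rrot_apply_j i j hij]
      linear_combination Real.sin θ * hc1 + Real.cos θ * hc2 - u θ j * Real.sin_sq_add_cos_sq θ
    · rw [Rrot_apply_other i j d hdi hdj]
      rw [← hu0]
      exact hcd d hdi hdj

end Cov
section Hgen
variable (X : Phase → R3)

lemma hgen_pair (h2 : ∀ a b : Fin 3, ∀ γ, pb (fun γ => X γ a) (Pgen b) γ = kdelta a b)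
    (h3 : ∀ a b c : Fin 3, ∀ γ, pb (Jgen a b) (fun γ => X γ c) γ
      = kdelta a c * X γ b - kdelta b c * X γ a) (a b : Fin 3) (hab : a ≠ b)
    (hvec : ∀ v : R3, (fun d => v b * kdelta a d - v a * kdelta b d) = -(Arot a b v))
    (hcr : ∀ v : R3, cross3 v (fun d => eps3 a b d) = -(Arot a b v)) :
    ∀ p s : R3, ∀ c : Fin 3, fderiv ℝ (fun γ => X γ c) ((0, p, s) : Phase)
      (0, Arot a b p, Arot a b s) = Arot a b (X (0, p, s)) c := by
  intro p s c
  have hk := key X h2 h3 a b c p s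
  rw [hvec p, hcr s] at hk
  have hneg : ((0, -(Arot a b p), -(Arot a b s)) : Phase)
      = -((0, Arot a b p, Arot a b s) : Phase) := by
    simp [Prod.ext_iff]
  rw [hneg, map_neg] at hk
  have := neg_eq_iff_eq_neg.mp hk
  rw [this]
  by_cases hci : c = a
  · rw [hci, Arot_i]
    simp [kdelta, hab, Ne.symm hab]
  · by_cases hcj : c = b
    · rw [hcj, Arot_j a b hab]
      simp [kdelta, hab, Ne.symm hab, hcj]
    · rw [Arot_other a b c hci hcj]
      simp [kdelta, Ne.symm hci, Ne.symm hcj]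

lemma hgen01 (h2 : ∀ a b : Fin 3, ∀ γ, pb (fun γ => X γ a) (Pgen b) γ = kdelta a b)
    (h3 : ∀ a b c : Fin 3, ∀ γ, pb (Jgen a b) (fun γ => X γ c) γ
      = kdelta a c * X γ b - kdelta b c * X γ a) : ∀ p s : R3, ∀ c : Fin 3, fderiv ℝ (fun γ => X γ c) ((0, p, s) : Phase)
    (0, Arot 0 1 p, Arot 0 1 s) = Arot 0 1 (X (0, p, s)) c := by
  refine hgen_pair X h2 h3 0 1 (by decide) (fun v => ?_) (fun v => ?_) 
  · funext d; fin_cases d <;> simp [Arot, kdelta, Fin.ext_iff] <;> norm_num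
  · funext d; fin_cases d <;> simp [Arot, cross3, eps3, isgn, Fin.ext_iff] <;> norm_num

lemma hgen12 (h2 : ∀ a b : Fin 3, ∀ γ, pb (fun γ => X γ a) (Pgen b) γ = kdelta a b)
    (h3 : ∀ a b c : Fin 3, ∀ γ, pb (Jgen a b) (fun γ => X γ c) γ
      = kdelta a c * X γ b - kdelta b c * X γ a) : ∀ p s : R3, ∀ c : Fin 3, fderiv ℝ (fun γ => X γ c) ((0, p, s) : Phase)
    (0, Arot 1 2 p, Arot 1 2 s) = Arot 1 2 (X (0, p, s)) c := by
  refine hgen_pair X h2 h3 1 2 (by decide) (fun v => ?_) (fun v => ?_)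
  · funext d; fin_cases d <;> simp [Arot, kdelta, Fin.ext_iff] <;> norm_num
  · funext d; fin_cases d <;> simp [Arot, cross3, eps3, isgn, Fin.ext_iff] <;> norm_num

lemma hgen02 (h2 : ∀ a b : Fin 3, ∀ γ, pb (fun γ => X γ a) (Pgen b) γ = kdelta a b)
    (h3 : ∀ a b c : Fin 3, ∀ γ, pb (Jgen a b) (fun γ => X γ c) γ
      = kdelta a c * X γ b - kdelta b c * X γ a) : ∀ p s : R3, ∀ c : Fin 3, fderiv ℝ (fun γ => X γ c) ((0, p, s) : Phase)
    (0, Arot 0 2 p, Arot 0 2 s) = Arot 0 2 (X (0, p, s)) c := by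
  refine hgen_pair X h2 h3 0 2 (by decide) (fun v => ?_) (fun v => ?_)
  · funext d; fin_cases d <;> simp [Arot, kdelta, Fin.ext_iff] <;> norm_num
  · funext d; fin_cases d <;> simp [Arot, cross3, eps3, isgn, Fin.ext_iff] <;> norm_num

end Hgen
lemma cont_zero (G : ℝ → ℝ) (hG : Continuous G) (h : ∀ t : ℝ, t ≠ 0 → G t = 0) :
    ∀ t : ℝ, G t = 0 := by
  intro t
  by_cases ht : t = 0
  · subst ht
    have h1 : Filter.Tendsto (fun n : ℕ => (1 : ℝ) / (n + 1)) Filter.atTop (nhds 0) :=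
      tendsto_one_div_add_atTop_nhds_zero_nat
    have h2 := (hG.tendsto 0).comp h1
    have h3 : (fun n : ℕ => G ((1 : ℝ) / (n + 1))) = fun _ => (0 : ℝ) := by
      funext n
      exact h _ (by positivity)
    rw [show (G ∘ fun n : ℕ => (1 : ℝ) / (n + 1)) = fun n : ℕ => G ((1 : ℝ) / (n + 1)) from rfl,
      h3] at h2
    exact tendsto_nhds_unique h2 tendsto_const_nhds
  · exact h t ht

lemma dot3_kdelta_left (v : R3) (b : Fin 3) : dot3 (fun a => kdelta b a) v = v b := by
  simp [dot3, kdelta, Fin.sum_univ_three]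

section Fam
variable (X : Phase → R3)

/-- dX of a component of X as a function. -/
lemma dX_X_fun (h2 : ∀ a b : Fin 3, ∀ γ, pb (fun γ => X γ a) (Pgen b) γ = kdelta a b)
    (c : Fin 3) (γ : Phase) : dX (fun γ => X γ c) γ = fun d => kdelta c d := by
  funext d
  exact dX_X X h2 c d γ

/-- Step A : components 0 and 1 of X vanish at planar configurations. -/
lemma fam01 (hX : ContDiff ℝ 1 X)
    (h2 : ∀ a b : Fin 3, ∀ γ, pb (fun γ => X γ a) (Pgen b) γ = kdelta a b)
    (h3 : ∀ a b c : Fin 3, ∀ γ, pb (Jgen a b) (fun γ => X γ c) γ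
      = kdelta a c * X γ b - kdelta b c * X γ a)
    (h4 : ∀ x p s : R3, X (x, -p, -s) = X (x, p, s))
    (p s : R3) (hp2 : p 2 = 0) (hs2 : s 2 = 0) :
    X (0, p, s) 0 = 0 ∧ X (0, p, s) 1 = 0 := by
  have hcov := cov X hX 0 1 (by decide) (hgen01 X h2 h3) Real.pi p s
  have hRp : Rrot 0 1 Real.pi p = -p := by
    funext d
    fin_cases d <;>
      simp [Rrot, Real.cos_pi, Real.sin_pi, Fin.ext_iff, hp2] <;> ring
  have hRs : Rrot 0 1 Real.pi s = -s := by
    funext d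
    fin_cases d <;>
      simp [Rrot, Real.cos_pi, Real.sin_pi, Fin.ext_iff, hs2] <;> ring
  rw [hRp, hRs, h4] at hcov
  constructor
  · have := congrFun hcov 0
    rw [Rrot_apply_i] at this
    rw [Real.cos_pi, Real.sin_pi] at this
    linarith
  · have := congrFun hcov 1
    rw [Rrot_apply_j 0 1 (by decide)] at this
    rw [Real.cos_pi, Real.sin_pi] at this
    linarith

end Fam
section Fam2
variable (X : Phase → R3)

lemma famf_inner (hX : ContDiff ℝ 1 X)
    (h1 : ∀ a b : Fin 3, ∀ γ, pb (fun γ => X γ a) (fun γ => X γ b) γ = 0)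
    (h2 : ∀ a b : Fin 3, ∀ γ, pb (fun γ => X γ a) (Pgen b) γ = kdelta a b)
    (h3 : ∀ a b c : Fin 3, ∀ γ, pb (Jgen a b) (fun γ => X γ c) γ
      = kdelta a c * X γ b - kdelta b c * X γ a)
    (h4 : ∀ x p s : R3, X (x, -p, -s) = X (x, p, s))
    (s : R3) (hs1 : s 1 ≠ 0) (hs2 : s 2 = 0) :
    ∀ ρ : ℝ, X (0, Pi.single 0 ρ, s) 2 = 0 := by
  set F : ℝ → ℝ := fun ρ => X (0, Pi.single 0 ρ, s) 2 with hFdef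
  -- the curve is C¹
  have hsingle : ∀ d : Fin 3, d ≠ 0 → ∀ ρ : ℝ, (Pi.single (0 : Fin 3) ρ : R3) d = 0 := by
    intro d hd ρ
    apply Pi.single_eq_of_ne hd
  have hcurve : ContDiff ℝ 1 (fun ρ : ℝ => ((0, Pi.single 0 ρ, s) : Phase)) := by
    refine contDiff_const.prodMk (ContDiff.prodMk ?_ contDiff_const)
    refine contDiff_pi.mpr fun d => ?_
    by_cases hd : d = 0
    · subst hd
      simp only [Pi.single_eq_same]
      exact contDiff_id
    · simp only [hsingle d hd]
      exact contDiff_const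
  have hFc : ContDiff ℝ 1 F := (hXc X hX 2).comp hcurve
  -- basic vanishing of components 0 and 1
  have hp2 : ∀ ρ : ℝ, (Pi.single (0 : Fin 3) ρ : R3) 2 = 0 := hsingle 2 (by decide)
  have hX0 : ∀ ρ : ℝ, X (0, Pi.single 0 ρ, s) 0 = 0 :=
    fun ρ => (fam01 X hX h2 h3 h4 _ s (hp2 ρ) hs2).1
  have hX1 : ∀ ρ : ℝ, X (0, Pi.single 0 ρ, s) 1 = 0 :=
    fun ρ => (fam01 X hX h2 h3 h4 _ s (hp2 ρ) hs2).2
  -- S-relations from key (1,2)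
  have hws12 : cross3 s (fun d => eps3 1 2 d) = (-(s 1)) • (Pi.single 2 1 : R3) := by
    funext d
    fin_cases d <;> simp [cross3, eps3, isgn, hs2, Pi.single_apply, Fin.ext_iff] <;> norm_num
  have hS : ∀ ρ : ℝ, ∀ c : Fin 3,
      -(s 1) * fderiv ℝ (fun γ => X γ c) ((0, Pi.single 0 ρ, s) : Phase) (0, 0, Pi.single 2 1)
        = kdelta 1 c * X (0, Pi.single 0 ρ, s) 2 - kdelta 2 c * X (0, Pi.single 0 ρ, s) 1 := by
    intro ρ c
    have hk := key X h2 h3 1 2 c (Pi.single 0 ρ) s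
    have hwp : (fun d => (Pi.single (0 : Fin 3) ρ : R3) 2 * kdelta 1 d
        - (Pi.single (0 : Fin 3) ρ : R3) 1 * kdelta 2 d) = (0 : R3) := by
      funext d
      simp [hsingle 2 (by decide), hsingle 1 (by decide)]
    rw [hwp, hws12] at hk
    have hsm : ((0, 0, (-(s 1)) • (Pi.single 2 1 : R3)) : Phase)
        = (-(s 1)) • ((0, 0, Pi.single 2 1) : Phase) := by
      simp [Prod.ext_iff]
    rw [hsm, map_smul, smul_eq_mul] at hk
    exact hk
  have hS0 : ∀ ρ : ℝ,
      fderiv ℝ (fun γ => X γ 0) ((0, Pi.single 0 ρ, s) : Phase) (0, 0, Pi.single 2 1) = 0 := by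
    intro ρ
    have h := hS ρ 0
    rw [show kdelta 1 0 = 0 by norm_num [kdelta, Fin.ext_iff],
      show kdelta 2 0 = 0 by norm_num [kdelta, Fin.ext_iff]] at h
    have := mul_eq_zero.mp (by linarith [h] : -(s 1) * fderiv ℝ (fun γ => X γ 0)
      ((0, Pi.single 0 ρ, s) : Phase) (0, 0, Pi.single 2 1) = 0)
    rcases this with h' | h'
    · exact absurd (neg_eq_zero.mp h') hs1
    · exact h'
  have hS2 : ∀ ρ : ℝ,
      fderiv ℝ (fun γ => X γ 2) ((0, Pi.single 0 ρ, s) : Phase) (0, 0, Pi.single 2 1) = 0 := by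
    intro ρ
    have h := hS ρ 2
    rw [show kdelta 1 2 = 0 by norm_num [kdelta, Fin.ext_iff],
      show kdelta 2 2 = 1 by norm_num [kdelta], hX1 ρ] at h
    have := mul_eq_zero.mp (by linarith [h] : -(s 1) * fderiv ℝ (fun γ => X γ 2)
      ((0, Pi.single 0 ρ, s) : Phase) (0, 0, Pi.single 2 1) = 0)
    rcases this with h' | h'
    · exact absurd (neg_eq_zero.mp h') hs1
    · exact h'
  -- Q-relation from key (2,0)
  have hQ : ∀ ρ : ℝ,
      ρ * fderiv ℝ (fun γ => X γ 0) ((0, Pi.single 0 ρ, s) : Phase) (0, Pi.single 2 1, 0)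
        = -(F ρ) := by
    intro ρ
    have hk := key X h2 h3 2 0 0 (Pi.single 0 ρ) s
    have hwp : (fun d => (Pi.single (0 : Fin 3) ρ : R3) 0 * kdelta 2 d
        - (Pi.single (0 : Fin 3) ρ : R3) 2 * kdelta 0 d) = ρ • (Pi.single 2 1 : R3) := by
      funext d
      fin_cases d <;>
        simp [hsingle 2 (by decide), kdelta, Pi.single_apply, Fin.ext_iff] <;> norm_num
    have hws : cross3 s (fun d => eps3 2 0 d) = (s 0) • (Pi.single 2 1 : R3) := by
      funext d
      fin_cases d <;> simp [cross3, eps3, isgn, hs2, Pi.single_apply, Fin.ext_iff] <;> norm_num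
    rw [hwp, hws] at hk
    have hsplit : ((0, ρ • (Pi.single 2 1 : R3), (s 0) • (Pi.single 2 1 : R3)) : Phase)
        = ρ • ((0, Pi.single 2 1, 0) : Phase) + (s 0) • ((0, 0, Pi.single 2 1) : Phase) := by
      simp [Prod.ext_iff]
    rw [hsplit, map_add, map_smul, map_smul, smul_eq_mul, smul_eq_mul, hS0 ρ, mul_zero,
      add_zero] at hk
    rw [hk]
    rw [show kdelta 2 0 = 0 by norm_num [kdelta, Fin.ext_iff],
      show kdelta 0 0 = 1 by norm_num [kdelta]]
    simp only [hFdef]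
    ring
  -- h1 : equality of the two Q's
  have hQQ : ∀ ρ : ℝ,
      fderiv ℝ (fun γ => X γ 2) ((0, Pi.single 0 ρ, s) : Phase) (0, Pi.single 0 1, 0)
        = fderiv ℝ (fun γ => X γ 0) ((0, Pi.single 0 ρ, s) : Phase) (0, Pi.single 2 1, 0) := by
    intro ρ
    have h := h1 2 0 ((0, Pi.single 0 ρ, s) : Phase)
    unfold pb at h
    rw [dX_X_fun X h2 2, dX_X_fun X h2 0] at h
    rw [dot3_kdelta_left, dot3_kdelta] at h
    have hterm : dot3 ((0, Pi.single 0 ρ, s) : Phase).2.2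
        (cross3 (dS (fun γ => X γ 2) (0, Pi.single 0 ρ, s))
          (dS (fun γ => X γ 0) (0, Pi.single 0 ρ, s))) = 0 := by
      have e2 : dS (fun γ => X γ 2) ((0, Pi.single 0 ρ, s) : Phase) 2 = 0 := hS2 ρ
      have e0 : dS (fun γ => X γ 0) ((0, Pi.single 0 ρ, s) : Phase) 2 = 0 := hS0 ρ
      show dot3 s _ = 0
      simp [dot3, cross3, Fin.sum_univ_three, e2, e0, hs2]
    rw [hterm, add_zero] at h
    have : dP (fun γ => X γ 0) ((0, Pi.single 0 ρ, s) : Phase) 2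
        = dP (fun γ => X γ 2) ((0, Pi.single 0 ρ, s) : Phase) 0 := by linarith
    exact this.symm
  -- derivative of F
  have hDF : ∀ ρ : ℝ, HasDerivAt F
      (fderiv ℝ (fun γ => X γ 2) ((0, Pi.single 0 ρ, s) : Phase) (0, Pi.single 0 1, 0)) ρ := by
    intro ρ
    have hmid : HasDerivAt (fun ρ : ℝ => (Pi.single 0 ρ : R3)) (Pi.single 0 1) ρ := by
      rw [hasDerivAt_pi]
      intro d
      by_cases hd : d = 0
      · subst hd
        simp only [Pi.single_eq_same]
        exact hasDerivAt_id' ρ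
      · simp only [hsingle d hd, Pi.single_eq_of_ne hd]
        exact hasDerivAt_const ρ 0
    have hcur : HasDerivAt (fun ρ : ℝ => ((0, Pi.single 0 ρ, s) : Phase))
        ((0, Pi.single 0 1, 0) : Phase) ρ :=
      (hasDerivAt_const ρ (0 : R3)).prodMk (hmid.prodMk (hasDerivAt_const ρ s))
    exact ((hXd X hX 2 _).hasFDerivAt).comp_hasDerivAt ρ hcur
  -- m = ρ F ρ has zero derivative
  have hm : ∀ ρ : ℝ, HasDerivAt (fun ρ => ρ * F ρ) 0 ρ := by
    intro ρ
    have h := (hasDerivAt_id ρ).mul (hDF ρ)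
    rw [hQQ ρ] at h
    refine h.congr_deriv ?_
    have := hQ ρ
    simp only [id]
    nlinarith [hQ ρ]
  have hconst : ∀ ρ : ℝ, ρ * F ρ = 0 := by
    intro ρ
    have := is_const_of_deriv_eq_zero (𝕜 := ℝ) (f := fun ρ => ρ * F ρ)
      (fun t => (hm t).differentiableAt) (fun t => (hm t).deriv) ρ 0
    simpa using this
  have hFzero : ∀ ρ : ℝ, F ρ = 0 := by
    refine cont_zero F (hFc.continuous) fun t ht => ?_
    have := hconst t
    rcases mul_eq_zero.mp this with h' | h'
    · exact absurd h' ht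
    · exact h'
  exact hFzero

end Fam2
section Fam3
variable (X : Phase → R3)

lemma famAll (hX : ContDiff ℝ 1 X)
    (h1 : ∀ a b : Fin 3, ∀ γ, pb (fun γ => X γ a) (fun γ => X γ b) γ = 0)
    (h2 : ∀ a b : Fin 3, ∀ γ, pb (fun γ => X γ a) (Pgen b) γ = kdelta a b)
    (h3 : ∀ a b c : Fin 3, ∀ γ, pb (Jgen a b) (fun γ => X γ c) γ
      = kdelta a c * X γ b - kdelta b c * X γ a)
    (h4 : ∀ x p s : R3, X (x, -p, -s) = X (x, p, s))
    (p s : R3) (hp1 : p 1 = 0) (hp2 : p 2 = 0) (hs2 : s 2 = 0) :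
    X (0, p, s) = 0 := by
  have hp : p = (Pi.single 0 (p 0) : R3) := by
    funext d
    fin_cases d <;> simp [Pi.single_apply, Fin.ext_iff, hp1, hp2]
  have h2comp : X (0, p, s) 2 = 0 := by
    set G : ℝ → ℝ := fun σ => X (0, (Pi.single 0 (p 0) : R3),
      fun d => if d = 0 then s 0 else if d = 1 then σ else 0) 2 with hGdef
    have hcs : Continuous (fun σ : ℝ =>
        (fun d : Fin 3 => if d = 0 then s 0 else if d = 1 then σ else 0 : R3)) := by
      refine continuous_pi fun d => ?_
      by_cases hd0 : d = 0
      · simp only [hd0, if_pos rfl]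
        exact continuous_const
      · by_cases hd1 : d = 1
        · simp only [hd1, if_neg (show (1 : Fin 3) ≠ 0 by decide), if_pos rfl]
          exact continuous_id
        · simp only [if_neg hd0, if_neg hd1]
          exact continuous_const
    have hGcont : Continuous G := by
      have : Continuous (fun σ : ℝ => ((0, (Pi.single 0 (p 0) : R3),
          fun d : Fin 3 => if d = 0 then s 0 else if d = 1 then σ else 0) : Phase)) :=
        continuous_const.prodMk (continuous_const.prodMk hcs)
      exact (continuous_apply 2).comp (hX.continuous.comp this)
    have hGz : ∀ σ : ℝ, σ ≠ 0 → G σ = 0 := by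
      intro σ hσ
      refine famf_inner X hX h1 h2 h3 h4 _ ?_ ?_ (p 0)
      · simpa using hσ
      · simp
    have hG := cont_zero G hGcont hGz (s 1)
    have hs : s = (fun d => if d = 0 then s 0 else if d = 1 then s 1 else 0) := by
      funext d
      fin_cases d <;> simp [Fin.ext_iff, hs2]
    rw [hp, hs]
    exact hG
  funext d
  fin_cases d
  · show X (0, p, s) 0 = 0
    exact (fam01 X hX h2 h3 h4 p s hp2 hs2).1
  · show X (0, p, s) 1 = 0
    exact (fam01 X hX h2 h3 h4 p s hp2 hs2).2
  · exact h2comp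

end Fam3

lemma angle (a b : ℝ) : ∃ θ : ℝ, Real.sin θ * a + Real.cos θ * b = 0 := by
  by_cases h : a = 0 ∧ b = 0
  · exact ⟨0, by simp [h.1, h.2]⟩
  · have hz : (⟨a, b⟩ : ℂ) ≠ 0 := by
      simp only [ne_eq, Complex.ext_iff, Complex.zero_re, Complex.zero_im]
      tauto
    refine ⟨-(Complex.arg (⟨a, b⟩ : ℂ)), ?_⟩
    rw [Real.sin_neg, Real.cos_neg, Complex.cos_arg hz, Complex.sin_arg]
    show -((⟨a, b⟩ : ℂ).im / _) * a + (⟨a, b⟩ : ℂ).re / _ * b = 0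
    have : (⟨a, b⟩ : ℂ).im = b := rfl
    have h2 : (⟨a, b⟩ : ℂ).re = a := rfl
    rw [this, h2]
    ring
section Main
variable (X : Phase → R3)

lemma Yzero (hX : ContDiff ℝ 1 X)
    (h1 : ∀ a b : Fin 3, ∀ γ, pb (fun γ => X γ a) (fun γ => X γ b) γ = 0)
    (h2 : ∀ a b : Fin 3, ∀ γ, pb (fun γ => X γ a) (Pgen b) γ = kdelta a b)
    (h3 : ∀ a b c : Fin 3, ∀ γ, pb (Jgen a b) (fun γ => X γ c) γ
      = kdelta a c * X γ b - kdelta b c * X γ a)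
    (h4 : ∀ x p s : R3, X (x, -p, -s) = X (x, p, s))
    (p s : R3) : X (0, p, s) = 0 := by
  obtain ⟨θa, ha⟩ := angle (p 0) (p 1)
  set p1 := Rrot 0 1 θa p with hp1def
  set s1 := Rrot 0 1 θa s with hs1def
  obtain ⟨θb, hb⟩ := angle (p1 0) (p1 2)
  set p2 := Rrot 0 2 θb p1 with hp2def
  set s2 := Rrot 0 2 θb s1 with hs2def
  obtain ⟨θc, hc⟩ := angle (s2 1) (s2 2)
  set p3 := Rrot 1 2 θc p2 with hp3def
  set s3 := Rrot 1 2 θc s2 with hs3def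
  -- the final configuration is planar
  have hp1e : p1 1 = 0 := by
    rw [hp1def, Rrot_apply_j 0 1 (by decide)]
    linarith [ha]
  have hp21 : p2 1 = 0 := by
    rw [hp2def, Rrot_apply_other 0 2 1 (by decide) (by decide)]
    exact hp1e
  have hp22 : p2 2 = 0 := by
    rw [hp2def, Rrot_apply_j 0 2 (by decide)]
    linarith [hb]
  have hp31 : p3 1 = 0 := by
    rw [hp3def, Rrot_apply_i]
    rw [hp21, hp22]
    ring
  have hp32 : p3 2 = 0 := by
    rw [hp3def, Rrot_apply_j 1 2 (by decide)]
    rw [hp21, hp22]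
    ring
  have hs32 : s3 2 = 0 := by
    rw [hs3def, Rrot_apply_j 1 2 (by decide)]
    linarith [hc]
  have hfam := famAll X hX h1 h2 h3 h4 p3 s3 hp31 hp32 hs32
  have e1 := cov X hX 0 1 (by decide) (hgen01 X h2 h3) θa p s
  have e2 := cov X hX 0 2 (by decide) (hgen02 X h2 h3) θb p1 s1
  have e3 := cov X hX 1 2 (by decide) (hgen12 X h2 h3) θc p2 s2
  rw [← hp1def, ← hs1def] at e1
  rw [← hp2def, ← hs2def] at e2
  rw [← hp3def, ← hs3def] at e3
  rw [e3, e2, e1] at hfam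
  have z1 := Rrot_eq_zero 1 2 (by decide) θc _ hfam
  have z2 := Rrot_eq_zero 0 2 (by decide) θb _ z1
  exact Rrot_eq_zero 0 1 (by decide) θa _ z2

end Main
-- coordinate function derivatives
lemma hasFDerivAt_coord (a : Fin 3) (γ : Phase) :
    HasFDerivAt (fun γ : Phase => γ.1 a) (cXc a) γ :=
  by have h := (hasFDerivAt_apply (𝕜 := ℝ) a γ.1).comp γ (hasFDerivAt_fst (𝕜 := ℝ) (p := γ)); exact h

@[simp] lemma fderiv_coord (a : Fin 3) (γ : Phase) :
    fderiv ℝ (fun γ : Phase => γ.1 a) γ = cXc a :=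
  (hasFDerivAt_coord a γ).fderiv

@[simp] lemma dX_coord (a : Fin 3) (γ : Phase) :
    dX (fun γ : Phase => γ.1 a) γ = fun d => kdelta a d := by
  funext d; simp [dX]
@[simp] lemma dP_coord (a : Fin 3) (γ : Phase) :
    dP (fun γ : Phase => γ.1 a) γ = fun _ => 0 := by
  funext d; simp [dP]
@[simp] lemma dS_coord (a : Fin 3) (γ : Phase) :
    dS (fun γ : Phase => γ.1 a) γ = fun _ => 0 := by
  funext d; simp [dS]

lemma conv1 (a b : Fin 3) (γ : Phase) :
    pb (fun γ : Phase => γ.1 a) (fun γ => γ.1 b) γ = 0 := by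
  unfold pb
  rw [dX_coord, dP_coord, dS_coord, dX_coord, dP_coord, dS_coord]
  simp

lemma conv2 (a b : Fin 3) (γ : Phase) :
    pb (fun γ : Phase => γ.1 a) (Pgen b) γ = kdelta a b := by
  unfold pb
  rw [dX_coord, dP_coord, dS_coord, dX_Pgen, dP_Pgen, dS_Pgen]
  simp only [cross3_zero_right, dot3_zero_right, dot3_zero_left, sub_zero, add_zero]
  simp [dot3, kdelta, Fin.sum_univ_three]

lemma conv3 (a b c : Fin 3) (γ : Phase) :
    pb (Jgen a b) (fun γ : Phase => γ.1 c) γ = kdelta a c * γ.1 b - kdelta b c * γ.1 a := by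
  unfold pb
  rw [dX_Jgen, dP_Jgen, dS_Jgen, dX_coord, dP_coord, dS_coord]
  rw [dot3_zero_right, dot3_kdelta, cross3_zero_right, dot3_zero_right, add_zero]
  ring


theorem statement9 (X : Phase → R3) (hX : ContDiff ℝ 1 X)
    (h1 : ∀ a b : Fin 3, ∀ γ, pb (fun γ => X γ a) (fun γ => X γ b) γ = 0)
    (h2 : ∀ a b : Fin 3, ∀ γ, pb (fun γ => X γ a) (Pgen b) γ = kdelta a b)
    (h3 : ∀ a b c : Fin 3, ∀ γ, pb (Jgen a b) (fun γ => X γ c) γ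
      = kdelta a c * X γ b - kdelta b c * X γ a)
    (h4 : ∀ x p s : R3, X (x, -p, -s) = X (x, p, s)) :
    (∀ x p s : R3, X (x, p, s) = x) ∧
    (ContDiff ℝ 1 (fun γ : Phase => γ.1) ∧
     (∀ a b : Fin 3, ∀ γ, pb (fun γ : Phase => γ.1 a) (fun γ => γ.1 b) γ = 0) ∧
     (∀ a b : Fin 3, ∀ γ, pb (fun γ : Phase => γ.1 a) (Pgen b) γ = kdelta a b) ∧
     (∀ a b c : Fin 3, ∀ γ, pb (Jgen a b) (fun γ : Phase => γ.1 c) γ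
        = kdelta a c * γ.1 b - kdelta b c * γ.1 a) ∧
     (∀ x p s : R3, ((x, -p, -s) : Phase).1 = ((x, p, s) : Phase).1)) := by
  constructor
  · intro x p s
    funext c
    rw [X_split X hX h2 x p s c]
    have hz := congrFun (Yzero X hX h1 h2 h3 h4 p s) c
    rw [Pi.zero_apply] at hz
    rw [hz, add_zero]
  · exact ⟨contDiff_fst, conv1, conv2, conv3, fun x p s => rfl⟩
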